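/- Let A ∈ F_q^{m×n}, let U ⊆ [n] be nonempty, and for t ≥ 0 let R_0(t), ..., R_{ℓ(t)}(t) denote the intersection with U of the kernel correlation classes of the matrix A[i_1,...,i_t] obtained by pinning uniformly random coordinates i_1, ..., i_t ∈ U to zero. Define Δ_t = |R_0(t)| - |R_0(t-1)|. Then Δ_t ≥ 0, Σ_{t=1}^Θ Δ_t ≤ |U| for any Θ, and E[Δ_t | i_1,...,i_{t-1}] ≥ Σ_{h≥1} |R_h(t-1)|²/|U|. -/
import Mathlib


open scoped BigOperators

/-- The coordinates of `[n]` frozen to zero by the kernel of `A` after pinning the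
coordinates in the list `P` to zero. -/
def frozenSet {F : Type*} [Field F] {m n : ℕ} (A : Matrix (Fin m) (Fin n) F)
    (P : List (Fin n)) : Set (Fin n) :=
  {j | ∀ σ : Fin n → F, A.mulVec σ = 0 → (∀ p ∈ P, σ p = 0) → σ j = 0}

lemma frozen_mono {F : Type*} [Field F] {m n : ℕ} (A : Matrix (Fin m) (Fin n) F)
    {P Q : List (Fin n)} (h : ∀ p ∈ P, p ∈ Q) : frozenSet A P ⊆ frozenSet A Q := by
  intro j hj σ hσ hz
  exact hj σ hσ (fun p hp => hz p (h p hp))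

theorem stmt_15 {F : Type} [Field F] [Fintype F] [DecidableEq F]
    (m n : ℕ) (A : Matrix (Fin m) (Fin n) F)
    (U : Finset (Fin n)) (hU : U.Nonempty)
    -- the sequence of uniform pins and the associated frozen counts
    (i : ℕ → Fin n) (hiU : ∀ t, i t ∈ U)
    (P : ℕ → List (Fin n)) (hP : ∀ t, P t = (List.range t).map i)
    (N : ℕ → ℕ) (hN : ∀ t, N t = (frozenSet A (P t) ∩ ↑U).ncard)
    -- the non-frozen correlation classes after `t-1` pins, for the expectation bound
    (pins : List (Fin n)) (ℓ : ℕ) (R : Fin ℓ → Finset (Fin n))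
    (hRU : ∀ h, R h ⊆ U)
    (hRdisj : ∀ g h : Fin ℓ, g ≠ h → Disjoint (R g) (R h))
    (hRnonfrozen : ∀ h : Fin ℓ, ∀ j ∈ R h, j ∉ frozenSet A pins)
    (hRcover : ∀ j ∈ U, j ∉ frozenSet A pins → ∃ h, j ∈ R h)
    (hRclass : ∀ h : Fin ℓ, ∀ x ∈ R h, ∀ j ∈ R h, j ∈ frozenSet A (x :: pins)) :
    (∀ t : ℕ, N t ≤ N (t + 1)) ∧
    (∀ Θ : ℕ, ∑ t ∈ Finset.range Θ, ((N (t + 1) : ℤ) - (N t : ℤ)) ≤ U.card) ∧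
    ((1 / (U.card : ℝ)) * ∑ x ∈ U,
        (((frozenSet A (x :: pins) ∩ ↑U).ncard : ℝ) - ((frozenSet A pins ∩ ↑U).ncard : ℝ))
      ≥ (∑ h : Fin ℓ, ((R h).card : ℝ) ^ 2) / (U.card : ℝ)) := by
  have hmono : ∀ t, N t ≤ N (t + 1) := by
    intro t
    rw [hN t, hN (t + 1)]
    apply Set.ncard_le_ncard _ (Set.toFinite _)
    apply Set.inter_subset_inter_left
    apply frozen_mono
    intro p hp
    rw [hP t] at hp
    rw [hP (t + 1)]
    simp only [List.mem_map, List.mem_range] at hp ⊢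
    obtain ⟨a, ha, rfl⟩ := hp
    exact ⟨a, by omega, rfl⟩
  have hcap : ∀ t, N t ≤ U.card := by
    intro t
    rw [hN t]
    calc (frozenSet A (P t) ∩ ↑U).ncard ≤ (↑U : Set (Fin n)).ncard :=
          Set.ncard_le_ncard Set.inter_subset_right (Set.toFinite _)
      _ = U.card := by simp [Set.ncard_coe_finset]
  refine ⟨hmono, ?_, ?_⟩
  · intro Θ
    rw [Finset.sum_range_sub (fun t => (N t : ℤ))]
    have := hcap Θ
    omega
  · -- expectation bound
    have hU0 : (0 : ℝ) < U.card := by exact_mod_cast Finset.card_pos.mpr hU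
    set Fp : Set (Fin n) := frozenSet A pins ∩ ↑U with hFp
    have hD0 : ∀ x : Fin n,
        (0 : ℝ) ≤ ((frozenSet A (x :: pins) ∩ ↑U).ncard : ℝ) - (Fp.ncard : ℝ) := by
      intro x
      have : Fp ⊆ frozenSet A (x :: pins) ∩ ↑U := by
        apply Set.inter_subset_inter_left
        apply frozen_mono
        intro p hp; exact List.mem_cons_of_mem _ hp
      have := Set.ncard_le_ncard this (Set.toFinite _)
      simp only [sub_nonneg]
      exact_mod_cast this
    have key : ∀ h : Fin ℓ, ∀ x ∈ R h,
        ((R h).card : ℝ) ≤ ((frozenSet A (x :: pins) ∩ ↑U).ncard : ℝ) - (Fp.ncard : ℝ) := by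
      intro h x hx
      have hsub : Fp ∪ (↑(R h) : Set (Fin n)) ⊆ frozenSet A (x :: pins) ∩ ↑U := by
        apply Set.union_subset
        · apply Set.inter_subset_inter_left
          exact frozen_mono A (fun p hp => List.mem_cons_of_mem _ hp)
        · intro j hj
          exact ⟨hRclass h x hx j hj, hRU h hj⟩
      have hdisj : Disjoint Fp (↑(R h) : Set (Fin n)) := by
        rw [Set.disjoint_left]
        intro j hj hjR
        exact hRnonfrozen h j hjR hj.1
      have h1 : Fp.ncard + (R h).card ≤ (frozenSet A (x :: pins) ∩ ↑U).ncard := by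
        have := Set.ncard_le_ncard hsub (Set.toFinite _)
        rwa [Set.ncard_union_eq hdisj (Set.toFinite _) (Set.toFinite _),
          Set.ncard_coe_finset] at this
      have : (Fp.ncard : ℝ) + ((R h).card : ℝ) ≤
          ((frozenSet A (x :: pins) ∩ ↑U).ncard : ℝ) := by exact_mod_cast h1
      linarith
    have hsum : (∑ h : Fin ℓ, ((R h).card : ℝ) ^ 2) ≤
        ∑ x ∈ U, (((frozenSet A (x :: pins) ∩ ↑U).ncard : ℝ) - (Fp.ncard : ℝ)) := by
      have hbiU : (Finset.univ.biUnion R) ⊆ U := by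
        intro x hx
        rw [Finset.mem_biUnion] at hx
        obtain ⟨h, _, hxh⟩ := hx
        exact hRU h hxh
      calc (∑ h : Fin ℓ, ((R h).card : ℝ) ^ 2)
          = ∑ h : Fin ℓ, ∑ x ∈ R h, ((R h).card : ℝ) := by
            simp [Finset.sum_const, sq, mul_comm]
        _ ≤ ∑ h : Fin ℓ, ∑ x ∈ R h,
              (((frozenSet A (x :: pins) ∩ ↑U).ncard : ℝ) - (Fp.ncard : ℝ)) := by
            apply Finset.sum_le_sum
            intro h _
            exact Finset.sum_le_sum (fun x hx => key h x hx)
        _ = ∑ x ∈ Finset.univ.biUnion R,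
              (((frozenSet A (x :: pins) ∩ ↑U).ncard : ℝ) - (Fp.ncard : ℝ)) := by
            rw [Finset.sum_biUnion]
            intro g _ h _ hgh
            exact hRdisj g h hgh
        _ ≤ ∑ x ∈ U,
              (((frozenSet A (x :: pins) ∩ ↑U).ncard : ℝ) - (Fp.ncard : ℝ)) := by
            apply Finset.sum_le_sum_of_subset_of_nonneg hbiU
            intro x _ _
            exact hD0 x
    rw [ge_iff_le, one_div, inv_mul_eq_div, div_le_div_iff₀ hU0 hU0]
    have := mul_le_mul_of_nonneg_right hsum (le_of_lt hU0)
    linarith
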